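/- Let L ≥ 0 and let f : ℝ → [0,∞] be convex, non-decreasing, lower semicontinuous, with f(0) = 0, f finite and continuous on (-∞,1], and f(p) = +∞ for p > 1. Then the map q ↦ q − (f ∨ ℓ_L)^♯(q) is non-decreasing and continuous on [0,∞) and converges to max(f(1), L) = (f ∨ ℓ_L)(1) as q → ∞. -/

import Mathlib

open scoped Classical
noncomputable section

/-- Fenchel conjugate (Legendre transform) of an extended-real-valued function:
`fconj f q = sup_{p ∈ ℝ} (p*q - f p)`. -/
def fconj (f : ℝ → EReal) (q : ℝ) : EReal := ⨆ p : ℝ, ((p * q : ℝ) : EReal) - f p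

/-- Convexity for extended-real-valued functions on `ℝ`. -/
def ConvexE (f : ℝ → EReal) : Prop :=
  ∀ x y t : ℝ, 0 ≤ t → t ≤ 1 →
    f (t * x + (1 - t) * y) ≤ (t : EReal) * f x + ((1 - t : ℝ) : EReal) * f y

/-- The payoff function `ℓ_L`: `0` for `p ≤ 0`, `L` for `0 < p ≤ 1`, `+∞` for `p > 1`. -/
def ellL (L : ℝ) (p : ℝ) : EReal :=
  if p ≤ 0 then 0 else if p ≤ 1 then (L : EReal) else ⊤

/-- Right derivative (as an extended real) of `f` at `p`, i.e. the infimum of the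
right slopes `(f (p+h) - f p)/h` over `h > 0`. -/
def rightDE (f : ℝ → EReal) (p : ℝ) : EReal :=
  ⨅ h : {h : ℝ // 0 < h}, ((h.1⁻¹ : ℝ) : EReal) * (f (p + h.1) - f p)

/-- Left derivative (as an extended real) of `f` at `p`, i.e. the supremum of the
left slopes `(f p - f (p-h))/h` over `h > 0`. -/
def leftDE (f : ℝ → EReal) (p : ℝ) : EReal :=
  ⨆ h : {h : ℝ // 0 < h}, ((h.1⁻¹ : ℝ) : EReal) * (f p - f (p - h.1))

/-- Closed convex envelope of `f`: the pointwise supremum of all lower semicontinuous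
convex minorants of `f` (the largest closed convex function majorized by `f`). -/
def coE (f : ℝ → EReal) (p : ℝ) : EReal :=
  ⨆ g : {g : ℝ → EReal // ConvexE g ∧ LowerSemicontinuous g ∧ ∀ x, g x ≤ f x}, g.1 p

/-- Subdifferential of an extended-real-valued function at a point. -/
def subdiffE (f : ℝ → EReal) (p : ℝ) : Set ℝ :=
  {q : ℝ | ∀ r : ℝ, f p + ((q * (r - p) : ℝ) : EReal) ≤ f r}

/-- **Deterministic core of Lemma 3.4**: the map `q ↦ q - (f ∨ ℓ_L)^♯(q)` is
non-decreasing and continuous on `[0,∞)` and converges to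
`max (f 1) L = (f ∨ ℓ_L)(1)` as `q → ∞`. -/
theorem slope_map_monotone_continuous_tendsto
    (L : ℝ) (hL : 0 ≤ L) (f : ℝ → EReal)
    (hpos : ∀ p, 0 ≤ f p) (hconv : ConvexE f) (hmono : Monotone f)
    (hlsc : LowerSemicontinuous f) (hf0 : f 0 = 0)
    (hfin : ∀ p : ℝ, p ≤ 1 → f p ≠ ⊤) (hcont : ContinuousOn f (Set.Iic 1))
    (htop : ∀ p : ℝ, 1 < p → f p = ⊤) :
    MonotoneOn (fun q : ℝ => (q : EReal) - fconj (fun p => max (f p) (ellL L p)) q)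
      (Set.Ici (0 : ℝ)) ∧
    ContinuousOn (fun q : ℝ => (q : EReal) - fconj (fun p => max (f p) (ellL L p)) q)
      (Set.Ici (0 : ℝ)) ∧
    max (f 1) (ellL L 1) = max (f 1) (L : EReal) ∧
    Filter.Tendsto (fun q : ℝ => (q : EReal) - fconj (fun p => max (f p) (ellL L p)) q)
      Filter.atTop (nhds (max (f 1) (L : EReal))) := by
  classical
  set G : ℝ → EReal := fun p => max (f p) (ellL L p) with hGdef
  have hf1ne_bot : f 1 ≠ ⊥ := (EReal.bot_lt_zero.trans_le (hpos 1)).ne'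
  have hf1coe : (((f 1).toReal : ℝ) : EReal) = f 1 :=
    EReal.coe_toReal (hfin 1 le_rfl) hf1ne_bot
  have hellval : ∀ p : ℝ, 0 < p → p ≤ 1 → ellL L p = (L : EReal) := by
    intro p h1 h2
    simp [ellL, not_le.mpr h1, h2]
  have hell1 : ellL L 1 = (L : EReal) := hellval 1 one_pos le_rfl
  have hGpos : ∀ p, 0 ≤ G p := fun p => le_trans (hpos p) (le_max_left _ _)
  have hGnebot : ∀ p, G p ≠ ⊥ := fun p => (EReal.bot_lt_zero.trans_le (hGpos p)).ne'
  have hG0 : G 0 = 0 := by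
    simp [hGdef, ellL, hf0]
  have hGtop : ∀ p : ℝ, 1 < p → G p = ⊤ := fun p hp => by
    simp [hGdef, htop p hp]
  have hGfin : ∀ p : ℝ, p ≤ 1 → G p ≠ ⊤ := by
    intro p hp
    have h1 : ellL L p < ⊤ := by
      unfold ellL; split_ifs <;> simp
    have h2 : f p < ⊤ := lt_top_iff_ne_top.2 (hfin p hp)
    exact (max_lt h2 h1).ne
  have hellmono : Monotone (ellL L) := by
    intro a b hab
    unfold ellL
    split_ifs
    all_goals first
      | exact le_refl _
      | exact le_top
      | exact EReal.coe_nonneg.2 hL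
      | (exfalso; linarith)
  have hGmono : Monotone G := hmono.max hellmono
  set m : ℝ := max (f 1).toReal L with hmdef
  have hcoemax : ((m : ℝ) : EReal) = max (((f 1).toReal : ℝ) : EReal) ((L : ℝ) : EReal) :=
    (show Monotone ((↑·) : ℝ → EReal) from fun x y h => EReal.coe_le_coe_iff.2 h).map_max
  have hm' : max (f 1) (L : EReal) = (m : EReal) := by
    rw [hcoemax, hf1coe]
  have hG1 : G 1 = (m : EReal) := by
    show max (f 1) (ellL L 1) = (m : EReal)
    rw [hell1, hm']
  have hm0 : (0 : ℝ) ≤ m := le_trans hL (le_max_right _ _)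
  have hGposR : ∀ p : ℝ, p ≤ 1 → 0 ≤ (G p).toReal := by
    intro p hp
    have h := EReal.toReal_le_toReal (hGpos p) EReal.zero_ne_bot (hGfin p hp)
    simpa using h
  -- basic bounds on the conjugate
  have hFnonneg : ∀ q : ℝ, 0 ≤ fconj G q := by
    intro q
    have h : ((0 * q : ℝ) : EReal) - G 0 ≤ fconj G q :=
      le_iSup (fun p : ℝ => ((p * q : ℝ) : EReal) - G p) 0
    simpa [hG0] using h
  have hFle : ∀ q : ℝ, 0 ≤ q → fconj G q ≤ (q : EReal) := by
    intro q hq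
    refine iSup_le fun p => ?_
    by_cases hp : p ≤ 1
    · have hco : (((G p).toReal : ℝ) : EReal) = G p :=
        EReal.coe_toReal (hGfin p hp) (hGnebot p)
      have hgp : 0 ≤ (G p).toReal := hGposR p hp
      rw [← hco, ← EReal.coe_sub]
      refine EReal.coe_le_coe_iff.2 ?_
      have h2 : p * q ≤ q := mul_le_of_le_one_left hq hp
      linarith
    · rw [hGtop p (not_le.1 hp), EReal.sub_top]
      exact bot_le
  set c : ℝ → ℝ := fun q => (fconj G q).toReal with hcdef
  have hFcoe : ∀ q : ℝ, 0 ≤ q → fconj G q = ((c q : ℝ) : EReal) := by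
    intro q hq
    exact (EReal.coe_toReal ((hFle q hq).trans_lt (EReal.coe_lt_top q)).ne
      (EReal.bot_lt_zero.trans_le (hFnonneg q)).ne').symm
  have hc_nonneg : ∀ q : ℝ, 0 ≤ q → 0 ≤ c q := by
    intro q hq
    have h := hFnonneg q
    rw [hFcoe q hq] at h
    exact_mod_cast h
  have hc_le : ∀ q : ℝ, 0 ≤ q → c q ≤ q := by
    intro q hq
    have h := hFle q hq
    rw [hFcoe q hq] at h
    exact EReal.coe_le_coe_iff.1 h
  have hR1 : ∀ q : ℝ, 0 ≤ q → ∀ p : ℝ, p ≤ 1 → p * q - (G p).toReal ≤ c q := by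
    intro q hq p hp
    have h : ((p * q : ℝ) : EReal) - G p ≤ fconj G q :=
      le_iSup (fun p : ℝ => ((p * q : ℝ) : EReal) - G p) p
    rw [← EReal.coe_toReal (hGfin p hp) (hGnebot p), ← EReal.coe_sub, hFcoe q hq] at h
    exact_mod_cast h
  have hR2 : ∀ q r : ℝ, (∀ p : ℝ, p ≤ 1 → p * q - (G p).toReal ≤ r) →
      fconj G q ≤ (r : EReal) := by
    intro q r hb
    refine iSup_le fun p => ?_
    by_cases hp : p ≤ 1
    · rw [← EReal.coe_toReal (hGfin p hp) (hGnebot p), ← EReal.coe_sub]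
      exact EReal.coe_le_coe_iff.2 (hb p hp)
    · rw [hGtop p (not_le.1 hp), EReal.sub_top]
      exact bot_le
  have hR2' : ∀ q r : ℝ, 0 ≤ q → (∀ p : ℝ, p ≤ 1 → p * q - (G p).toReal ≤ r) →
      c q ≤ r := by
    intro q r hq hb
    have h := hR2 q r hb
    rw [hFcoe q hq] at h
    exact EReal.coe_le_coe_iff.1 h
  have hcmono : ∀ a b : ℝ, 0 ≤ a → a ≤ b → c b ≤ c a + (b - a) := by
    intro a b ha hab
    refine hR2' b _ (ha.trans hab) fun p hp => ?_
    have h1 := hR1 a ha p hp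
    have h2 : p * (b - a) ≤ b - a := mul_le_of_le_one_left (by linarith) hp
    have h3 : p * b - (G p).toReal = (p * a - (G p).toReal) + p * (b - a) := by ring
    linarith
  have hcconc : ∀ t q : ℝ, 0 ≤ t → t ≤ 1 → 0 ≤ q → c (t * q) ≤ t * c q := by
    intro t q ht0 ht1 hq
    refine hR2' (t * q) _ (mul_nonneg ht0 hq) fun p hp => ?_
    have h1 := hR1 q hq p hp
    have h2 : t * (p * q - (G p).toReal) ≤ t * c q := mul_le_mul_of_nonneg_left h1 ht0
    have hgp : 0 ≤ (G p).toReal := hGposR p hp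
    have h3 : 0 ≤ (1 - t) * (G p).toReal := mul_nonneg (by linarith) hgp
    have h4 : p * (t * q) - (G p).toReal
        = t * (p * q - (G p).toReal) - (1 - t) * (G p).toReal := by ring
    linarith
  have hh_mono : ∀ a b : ℝ, 0 ≤ a → a ≤ b → a - c a ≤ b - c b := by
    intro a b ha hab
    have := hcmono a b ha hab
    linarith
  have hc0 : c 0 = 0 := le_antisymm (hc_le 0 le_rfl) (hc_nonneg 0 le_rfl)
  have hg1R : (G 1).toReal = m := by rw [hG1, EReal.toReal_coe]
  have hub : ∀ q : ℝ, 0 ≤ q → q - c q ≤ m := by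
    intro q hq
    have h := hR1 q hq 1 le_rfl
    rw [hg1R, one_mul] at h
    linarith
  -- continuity of the real slope map
  have hlowbd : ∀ q0 q : ℝ, 0 < q0 → 0 ≤ q → q ≤ q0 →
      q / q0 * (q0 - c q0) ≤ q - c q := by
    intro q0 q hq0 hq hle
    have ht0 : 0 ≤ q / q0 := div_nonneg hq hq0.le
    have ht1 : q / q0 ≤ 1 := (div_le_one hq0).2 hle
    have hid : q / q0 * q0 = q := div_mul_cancel₀ q hq0.ne'
    have h1 : c q ≤ q / q0 * c q0 := by
      have := hcconc (q / q0) q0 ht0 ht1 hq0.le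
      rwa [hid] at this
    have h2 : q / q0 * (q0 - c q0) = q - q / q0 * c q0 := by
      rw [mul_sub, hid]
    linarith
  have hupbd : ∀ q0 q : ℝ, 0 < q0 → q0 ≤ q →
      q - c q ≤ q / q0 * (q0 - c q0) := by
    intro q0 q hq0 hle
    have hqpos : 0 < q := hq0.trans_le hle
    have ht0 : 0 ≤ q0 / q := div_nonneg hq0.le hqpos.le
    have ht1 : q0 / q ≤ 1 := (div_le_one hqpos).2 hle
    have hid : q0 / q * q = q0 := div_mul_cancel₀ q0 hqpos.ne'
    have h1 : c q0 ≤ q0 / q * c q := by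
      have := hcconc (q0 / q) q ht0 ht1 hqpos.le
      rwa [hid] at this
    have h2 : q / q0 * (q0 / q * c q) = c q := by
      field_simp
    have h3 : q / q0 * c q0 ≤ c q := by
      have := mul_le_mul_of_nonneg_left h1 (div_nonneg hqpos.le hq0.le)
      rwa [h2] at this
    have h4 : q / q0 * (q0 - c q0) = q - q / q0 * c q0 := by
      rw [mul_sub, div_mul_cancel₀ q hq0.ne']
    linarith
  have hcontc : ContinuousOn (fun q : ℝ => q - c q) (Set.Ici (0 : ℝ)) := by
    intro q0 hq0
    rcases eq_or_lt_of_le (Set.mem_Ici.1 hq0 : (0 : ℝ) ≤ q0) with h | h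
    · rw [← h]
      unfold ContinuousWithinAt
      have h0 : (fun q : ℝ => q - c q) 0 = 0 := by simp [hc0]
      rw [h0]
      refine tendsto_of_tendsto_of_tendsto_of_le_of_le'
        (g := fun _ : ℝ => (0 : ℝ)) (h := fun q : ℝ => q)
        tendsto_const_nhds
        ((continuous_id.tendsto 0).mono_left nhdsWithin_le_nhds) ?_ ?_
      · filter_upwards [self_mem_nhdsWithin] with q hq
        have := hc_le q hq
        linarith
      · filter_upwards [self_mem_nhdsWithin] with q hq
        have := hc_nonneg q hq
        simpa using this
    · unfold ContinuousWithinAt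
      have hlowt : Filter.Tendsto (fun q : ℝ => min (q0 - c q0) (q / q0 * (q0 - c q0)))
          (nhdsWithin q0 (Set.Ici 0)) (nhds ((fun q : ℝ => q - c q) q0)) := by
        have hcont' : Continuous (fun q : ℝ => min (q0 - c q0) (q / q0 * (q0 - c q0))) :=
          continuous_const.min ((continuous_id.div_const q0).mul continuous_const)
        have := (hcont'.tendsto q0).mono_left (nhdsWithin_le_nhds (s := Set.Ici (0 : ℝ)))
        simpa [div_self h.ne', min_self] using this
      have hhight : Filter.Tendsto (fun q : ℝ => max (q0 - c q0) (q / q0 * (q0 - c q0)))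
          (nhdsWithin q0 (Set.Ici 0)) (nhds ((fun q : ℝ => q - c q) q0)) := by
        have hcont' : Continuous (fun q : ℝ => max (q0 - c q0) (q / q0 * (q0 - c q0))) :=
          continuous_const.max ((continuous_id.div_const q0).mul continuous_const)
        have := (hcont'.tendsto q0).mono_left (nhdsWithin_le_nhds (s := Set.Ici (0 : ℝ)))
        simpa [div_self h.ne', max_self] using this
      refine tendsto_of_tendsto_of_tendsto_of_le_of_le' hlowt hhight ?_ ?_
      · filter_upwards [self_mem_nhdsWithin] with q hq
        rcases le_total q q0 with hle | hle
        · exact le_trans (min_le_right _ _) (hlowbd q0 q h hq hle)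
        · exact le_trans (min_le_left _ _) (hh_mono q0 q h.le hle)
      · filter_upwards [self_mem_nhdsWithin] with q hq
        rcases le_total q q0 with hle | hle
        · exact le_trans (hh_mono q q0 hq hle) (le_max_left _ _)
        · exact le_trans (hupbd q0 q h hle) (le_max_right _ _)
  have heq : ∀ q : ℝ, 0 ≤ q →
      (q : EReal) - fconj G q = ((q - c q : ℝ) : EReal) := by
    intro q hq
    rw [hFcoe q hq, ← EReal.coe_sub]
  refine ⟨?_, ?_, ?_, ?_⟩
  · intro a ha b hb hab
    simp only [heq a ha, heq b hb]
    exact EReal.coe_le_coe_iff.2 (hh_mono a b ha hab)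
  · exact (continuous_coe_real_ereal.comp_continuousOn hcontc).congr fun q hq =>
      heq q hq
  · rw [hell1]
  · rw [hm']
    have hGtends : Filter.Tendsto G (nhdsWithin 1 (Set.Iio 1)) (nhds ((m : ℝ) : EReal)) := by
      have h1 : Filter.Tendsto f (nhdsWithin 1 (Set.Iio 1)) (nhds (f 1)) :=
        (hcont 1 Set.self_mem_Iic).mono_left (nhdsWithin_mono 1 Set.Iio_subset_Iic_self)
      have h3 := h1.max (tendsto_const_nhds :
        Filter.Tendsto (fun _ : ℝ => (L : EReal)) (nhdsWithin 1 (Set.Iio 1)) (nhds (L : EReal)))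
      rw [hm'] at h3
      refine Filter.Tendsto.congr' ?_ h3
      have hmem : Set.Ioo (0 : ℝ) 1 ∈ nhdsWithin 1 (Set.Iio 1) := by
        rw [← Set.Ioi_inter_Iio]
        exact Filter.inter_mem (mem_nhdsWithin_of_mem_nhds (Ioi_mem_nhds one_pos))
          self_mem_nhdsWithin
      filter_upwards [hmem] with p hp
      simp [hGdef, hellval p hp.1 hp.2.le]
    have hreal : Filter.Tendsto (fun q : ℝ => q - c q) Filter.atTop (nhds m) := by
      rw [tendsto_order]
      constructor
      · intro a ha
        have hlt : ((a + m) / 2 : ℝ) < m := by linarith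
        have hev2 : ∀ᶠ p in nhdsWithin 1 (Set.Iio 1),
            (((a + m) / 2 : ℝ) : EReal) < G p :=
          hGtends.eventually (lt_mem_nhds (EReal.coe_lt_coe_iff.2 hlt))
        obtain ⟨p0, hp0gt, hp0lt1⟩ := (hev2.and self_mem_nhdsWithin).exists
        have hp0le : p0 ≤ 1 := (Set.mem_Iio.1 hp0lt1).le
        have hgp0 : ((a + m) / 2 : ℝ) < (G p0).toReal := by
          rw [← EReal.coe_toReal (hGfin p0 hp0le) (hGnebot p0)] at hp0gt
          exact_mod_cast hp0gt
        have h1p0 : 0 < 1 - p0 := by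
          have := hp0lt1
          linarith
        filter_upwards [Filter.eventually_ge_atTop (max 0 (m / (1 - p0)))] with q hq
        have hq0 : 0 ≤ q := le_trans (le_max_left _ _) hq
        have hq1 : m / (1 - p0) ≤ q := le_trans (le_max_right _ _) hq
        have hqm : m ≤ (1 - p0) * q := by
          rw [div_le_iff₀ h1p0] at hq1
          linarith
        have hcq : c q ≤ q - (a + m) / 2 := by
          refine hR2' q _ hq0 fun p hp => ?_
          rcases le_total p p0 with hpp | hpp
          · have h1 : p * q ≤ p0 * q := mul_le_mul_of_nonneg_right hpp hq0
            have h2 : 0 ≤ (G p).toReal := hGposR p hp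
            have h3 : (1 - p0) * q = q - p0 * q := by ring
            linarith
          · have h1 : (G p0).toReal ≤ (G p).toReal :=
              EReal.toReal_le_toReal (hGmono hpp) (hGnebot p0) (hGfin p hp)
            have h2 : p * q ≤ q := mul_le_of_le_one_left hq0 hp
            linarith
        linarith
      · intro a ha
        filter_upwards [Filter.eventually_ge_atTop (0 : ℝ)] with q hq
        exact lt_of_le_of_lt (hub q hq) ha
    have hcoeT : Filter.Tendsto (fun q : ℝ => ((q - c q : ℝ) : EReal))
        Filter.atTop (nhds ((m : ℝ) : EReal)) := EReal.tendsto_coe.2 hreal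
    refine Filter.Tendsto.congr' ?_ hcoeT
    filter_upwards [Filter.eventually_ge_atTop (0 : ℝ)] with q hq
    exact (heq q hq).symm
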